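/- With the notation above (α = wp, β = wq, γ = 1-w, R* the run-count vector at an independent geometric time N*-1), for any ℓ ≥ 1 the random variable R*_ℓ has distribution Geo(α_ℓ, β_ℓ), meaning P(R*_ℓ = 0) = α_ℓ and P(R*_ℓ = n) = (1-α_ℓ)(1-β_ℓ)β_ℓ^{n-1} for n ≥ 1, where α_ℓ = γ(1+σ_ℓ)/(1-β-βσ_ℓ), β_ℓ = βα^ℓ/(1-β-βσ_ℓ), and σ_ℓ = ∑_{j≥1, j≠ℓ} α^j. -/

import Mathlib

open scoped Classical
open Finset Filter

noncomputable section

/-- Weight (probability) of a Boolean string of length `n` under i.i.d. Bernoulli(p). -/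
def wt (p : ℝ) {n : ℕ} (x : Fin n → Bool) : ℝ :=
  ∏ i, (if x i then p else 1 - p)

/-- Extend a finite string by `false`. -/
def pad {n : ℕ} (x : Fin n → Bool) : ℕ → Bool :=
  fun i => if h : i < n then x ⟨i, h⟩ else false

/-- A maximal run of 1's of length exactly `ℓ` starts at position `i` (0-indexed)
within the first `n` positions. -/
def IsRunAt (x : ℕ → Bool) (n i ℓ : ℕ) : Prop :=
  1 ≤ ℓ ∧ i + ℓ ≤ n ∧ (∀ k < ℓ, x (i + k) = true) ∧
    (i = 0 ∨ x (i - 1) = false) ∧ (i + ℓ = n ∨ x (i + ℓ) = false)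

/-- `R_ℓ(n)`: the number of maximal runs of 1's of length exactly `ℓ` in the first `n` tosses. -/
def runCount (x : ℕ → Bool) (n ℓ : ℕ) : ℕ :=
  ((Finset.range n).filter (fun i => IsRunAt x n i ℓ)).card

/-- `G_ℓ(n)`: the number of maximal runs of 1's of length at least `ℓ` in the first `n` tosses. -/
def excCount (x : ℕ → Bool) (n ℓ : ℕ) : ℕ :=
  ∑ k ∈ Finset.Icc ℓ n, runCount x n k

/-- `L(n)`: the length of the longest run of 1's in the first `n` tosses. -/
def longestRun (x : ℕ → Bool) (n : ℕ) : ℕ :=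
  (Finset.range (n + 1)).sup
    (fun ℓ => if ∃ i, i + ℓ ≤ n ∧ ∀ k < ℓ, x (i + k) = true then ℓ else 0)

/-- Expectation of a (real) functional of `n` i.i.d. Bernoulli(p) tosses. -/
def Ex (p : ℝ) (n : ℕ) (f : (ℕ → Bool) → ℝ) : ℝ :=
  ∑ x : Fin n → Bool, wt p x * f (pad x)

/-- Expectation of a complex functional of `n` i.i.d. Bernoulli(p) tosses. -/
def ExC (p : ℝ) (n : ℕ) (f : (ℕ → Bool) → ℂ) : ℂ :=
  ∑ x : Fin n → Bool, (wt p x : ℂ) * f (pad x)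

/-- Probability of an event depending on the first `n` i.i.d. Bernoulli(p) tosses. -/
def Pr (p : ℝ) (n : ℕ) (A : Set (ℕ → Bool)) : ℝ :=
  ∑ x : Fin n → Bool, if pad x ∈ A then wt p x else 0

/-- Binomial coefficient with integer upper argument, vanishing for negative upper argument. -/
def C (a : ℤ) (b : ℕ) : ℝ :=
  if a < 0 then 0 else (a.toNat).choose b

lemma runCount_allTrue (x : ℕ → Bool) (n ℓ : ℕ) (hℓ : 1 ≤ ℓ)
    (h : ∀ k < n, x k = true) :
    runCount x n ℓ = if n = ℓ then 1 else 0 := by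
  unfold runCount
  have hfil : (Finset.range n).filter (fun i => IsRunAt x n i ℓ)
      = if n = ℓ then {0} else ∅ := by
    ext i
    simp only [mem_filter, mem_range]
    constructor
    · rintro ⟨hi, h1, h2, h3, h4, h5⟩
      have hi0 : i = 0 := by
        rcases h4 with h4 | h4
        · exact h4
        · by_contra hne
          have := h (i - 1) (by omega)
          rw [this] at h4; exact absurd h4 (by simp)
      subst hi0
      have hln : n = ℓ := by
        rcases h5 with h5 | h5
        · omega
        · by_contra hne
          have := h (0 + ℓ) (by omega)
          rw [this] at h5; exact absurd h5 (by simp)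
      simp [hln]
    · intro hi
      split_ifs at hi with hn
      · simp only [Finset.mem_singleton] at hi
        subst hi
        exact ⟨by omega, hℓ, by omega, fun k hk => h (0 + k) (by omega), Or.inl rfl,
          Or.inl (by omega)⟩
      · exact absurd hi (by simp)
  rw [hfil]
  split_ifs <;> simp

lemma isRunAt_shift (x : ℕ → Bool) (n j i ℓ : ℕ) (hj : j < n) (hxj : x j = false) :
    IsRunAt (fun t => x (j + 1 + t)) (n - (j + 1)) i ℓ ↔ IsRunAt x n (j + 1 + i) ℓ := by
  unfold IsRunAt
  have e1 : ∀ k : ℕ, j + 1 + (i + k) = j + 1 + i + k := fun k => by omega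
  constructor
  · rintro ⟨h1, h2, h3, h4, h5⟩
    refine ⟨h1, by omega, fun k hk => by rw [← e1 k]; exact h3 k hk, ?_, ?_⟩
    · right
      rcases Nat.eq_zero_or_pos i with hi | hi
      · subst hi
        have : j + 1 + 0 - 1 = j := by omega
        rw [this]; exact hxj
      · rcases h4 with h4 | h4
        · omega
        · have : j + 1 + i - 1 = j + 1 + (i - 1) := by omega
          rw [this]; exact h4
    · rcases h5 with h5 | h5
      · left; omega
      · right
        have : j + 1 + i + ℓ = j + 1 + (i + ℓ) := by omega
        rw [this]; exact h5
  · rintro ⟨h1, h2, h3, h4, h5⟩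
    refine ⟨h1, by omega, fun k hk => by show x (j+1+(i+k)) = true; rw [e1 k]; exact h3 k hk, ?_, ?_⟩
    · rcases Nat.eq_zero_or_pos i with hi | hi
      · exact Or.inl hi
      · right
        rcases h4 with h4 | h4
        · omega
        · show x (j + 1 + (i - 1)) = false
          have : j + 1 + i - 1 = j + 1 + (i - 1) := by omega
          rw [← this]; exact h4
    · rcases h5 with h5 | h5
      · left; omega
      · right
        show x (j + 1 + (i + ℓ)) = false
        have : j + 1 + (i + ℓ) = j + 1 + i + ℓ := by omega
        rw [this]; exact h5

lemma runCount_split (x : ℕ → Bool) (n j ℓ : ℕ) (hℓ : 1 ≤ ℓ) (hj : j < n)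
    (hlead : ∀ k < j, x k = true) (hxj : x j = false) :
    runCount x n ℓ = (if j = ℓ then 1 else 0) + runCount (fun t => x (j + 1 + t)) (n - (j + 1)) ℓ := by
  unfold runCount
  have hr : Finset.range n = Finset.range (j+1) ∪ Finset.Ico (j+1) n := by
    rw [Finset.range_eq_Ico, Finset.range_eq_Ico, Finset.Ico_union_Ico_eq_Ico (by omega : (0:ℕ) ≤ j + 1) (by omega : j + 1 ≤ n)]
  rw [hr, Finset.filter_union, Finset.card_union_of_disjoint]
  · congr 1
    · -- low part
      have hfil : (Finset.range (j+1)).filter (fun i => IsRunAt x n i ℓ)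
          = if j = ℓ then {0} else ∅ := by
        ext i
        simp only [mem_filter, mem_range]
        constructor
        · rintro ⟨hi, h1, h2, h3, h4, h5⟩
          have hi0 : i = 0 := by
            rcases h4 with h4 | h4
            · exact h4
            · by_contra hne
              have hij : i < j := by
                rcases Nat.lt_or_ge i j with h | h
                · exact h
                · have : i = j := by omega
                  subst this
                  have := h3 0 (by omega)
                  rw [Nat.add_zero] at this
                  rw [this] at hxj; exact absurd hxj (by simp)
              have := hlead (i - 1) (by omega)
              rw [this] at h4; exact absurd h4 (by simp)
          subst hi0
          have hℓj : ℓ ≤ j := by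
            by_contra hc
            have := h3 j (by omega)
            rw [Nat.zero_add] at this
            rw [this] at hxj; exact absurd hxj (by simp)
          have : j = ℓ := by
            by_contra hc
            have hlt : ℓ < j := by omega
            rcases h5 with h5 | h5
            · omega
            · rw [Nat.zero_add] at h5
              have := hlead ℓ hlt
              rw [this] at h5; exact absurd h5 (by simp)
          simp [this]
        · intro hi
          split_ifs at hi with hn
          · simp only [Finset.mem_singleton] at hi
            subst hi
            subst hn
            refine ⟨by omega, hℓ, by omega, fun k hk => by rw [Nat.zero_add]; exact hlead k hk,
              Or.inl rfl, Or.inr (by rw [Nat.zero_add]; exact hxj)⟩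
          · exact absurd hi (by simp)
      rw [hfil]
      split_ifs <;> simp
    · -- high part
      apply Finset.card_bij' (fun i _ => i - (j+1)) (fun i _ => j + 1 + i)
      · intro i hi
        simp only [mem_filter, mem_Ico] at hi
        simp only [mem_filter, mem_range]
        have hrw : j + 1 + (i - (j+1)) = i := by omega
        constructor
        · have := hi.2.2.1; omega
        · rw [isRunAt_shift x n j _ ℓ hj hxj, hrw]; exact hi.2
      · intro i hi
        simp only [mem_filter, mem_range] at hi
        simp only [mem_filter, mem_Ico]
        have h2 := (isRunAt_shift x n j i ℓ hj hxj).1 hi.2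
        exact ⟨⟨by omega, by have := h2.2.1; omega⟩, h2⟩
      · intro i hi; simp only [mem_filter, mem_Ico] at hi; omega
      · intro i hi; omega
  · apply Finset.disjoint_filter_filter
    rw [Finset.range_eq_Ico]
    exact Finset.Ico_disjoint_Ico_consecutive 0 (j+1) n


-- leading-true count
def lead {n : ℕ} (x : Fin n → Bool) : ℕ :=
  Nat.find (⟨n, by simp [pad]⟩ : ∃ i, pad x i = false)

lemma lead_le {n : ℕ} (x : Fin n → Bool) : lead x ≤ n :=
  Nat.find_le (by simp [pad])

lemma lead_spec {n : ℕ} (x : Fin n → Bool) : pad x (lead x) = false :=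
  Nat.find_spec (⟨n, by simp [pad]⟩ : ∃ i, pad x i = false)

lemma lead_min {n : ℕ} (x : Fin n → Bool) {k : ℕ} (hk : k < lead x) : pad x k = true := by
  have := Nat.find_min (⟨n, by simp [pad]⟩ : ∃ i, pad x i = false) hk
  simpa using this

lemma wt_eq_prod_range (p : ℝ) {n : ℕ} (x : Fin n → Bool) :
    wt p x = ∏ i ∈ range n, (if pad x i then p else 1 - p) := by
  unfold wt
  rw [← Fin.prod_univ_eq_prod_range (fun i => if pad x i then p else 1 - p) n]
  apply Finset.prod_congr rfl
  intro i _
  congr 1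
  simp [pad, i.isLt]

def tl {n : ℕ} (j : ℕ) (x : Fin n → Bool) : Fin (n - (j+1)) → Bool :=
  fun t => pad x (j + 1 + (t : ℕ))

def gl {n : ℕ} (j : ℕ) (y : Fin (n - (j+1)) → Bool) : Fin n → Bool :=
  fun i => if (i : ℕ) < j then true else if (i : ℕ) = j then false else pad y ((i : ℕ) - (j+1))

lemma pad_tl {n : ℕ} {j : ℕ} (hj : j < n) (x : Fin n → Bool) :
    pad (tl j x) = fun t => pad x (j + 1 + t) := by
  funext t
  by_cases ht : t < n - (j+1)
  · rw [pad]; rw [dif_pos ht]; rfl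
  · rw [pad]; rw [dif_neg ht]
    rw [pad, dif_neg (by omega)]

lemma Pr_eq_sum (p : ℝ) (N : ℕ) (P : (ℕ → Bool) → Prop) :
    Pr p N {x | P x} = ∑ x : Fin N → Bool, if P (pad x) then wt p x else 0 :=
  Finset.sum_congr rfl fun x _ => if_congr (iff_of_eq Set.mem_setOf_eq) rfl rfl

lemma Pr_rec (p : ℝ) (ℓ : ℕ) (hℓ : 1 ≤ ℓ) (m n : ℕ) :
    Pr p n {x | runCount x n ℓ = m} =
      (if (if n = ℓ then 1 else 0) = m then p ^ n else 0) +
      ∑ j ∈ range n, p ^ j * (1 - p) *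
        Pr p (n - (j+1)) {x | (if j = ℓ then 1 else 0) + runCount x (n - (j+1)) ℓ = m} := by
  rw [Pr_eq_sum]
  refine Eq.trans (Eq.symm (Finset.sum_fiberwise_of_maps_to
      (g := fun x : Fin n → Bool => lead x)
      (t := range (n+1)) (s := Finset.univ)
      (fun x _ => mem_range.mpr (Nat.lt_succ_of_le (lead_le x))) _)) ?_
  rw [Finset.sum_range_succ, add_comm]
  congr 1
  · -- top fiber : all-true string
    have hset : (Finset.univ.filter (fun x : Fin n → Bool => lead x = n))
        = {fun _ => true} := by
      ext x
      simp only [mem_filter, mem_univ, true_and, Finset.mem_singleton]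
      constructor
      · intro hx
        funext i
        have := lead_min x (show (i : ℕ) < lead x by rw [hx]; exact i.isLt)
        rw [pad, dif_pos i.isLt] at this
        exact this
      · rintro rfl
        refine le_antisymm (lead_le _) ?_
        by_contra hc
        push_neg at hc
        have := lead_spec (fun _ : Fin n => true)
        rw [pad, dif_pos hc] at this
        exact absurd this (by simp)
    rw [hset, Finset.sum_singleton]
    have hrc : runCount (pad (fun _ : Fin n => true)) n ℓ = if n = ℓ then 1 else 0 :=
      runCount_allTrue _ n ℓ hℓ (fun k hk => by rw [pad, dif_pos hk])
    have hwt : wt p (fun _ : Fin n => true) = p ^ n := by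
      rw [wt]
      simp
    rw [hrc, hwt]
    split_ifs <;> rfl
  · -- lower fibers
    apply Finset.sum_congr rfl
    intro j hj
    rw [mem_range] at hj
    rw [Pr_eq_sum, Finset.mul_sum]
    refine Finset.sum_bij' (fun x _ => tl j x) (fun y _ => gl j y) ?_ ?_ ?_ ?_ ?_
    · intro x hx; exact Finset.mem_univ _
    · -- glue lands in fiber
      intro y hy
      simp only [mem_filter, mem_univ, true_and]
      have h1 : pad (gl j y) j = false := by
        rw [pad, dif_pos hj]; simp only [gl]; simp
      have h2 : ∀ k < j, pad (gl j y) k = true := by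
        intro k hk
        rw [pad, dif_pos (by omega)]; simp only [gl]; simp [hk]
      refine le_antisymm (Nat.find_le h1) ?_
      by_contra hc
      push_neg at hc
      have := lead_spec (gl j y)
      rw [h2 _ hc] at this
      exact absurd this (by simp)
    · -- left inverse
      intro x hx
      simp only [mem_filter, mem_univ, true_and] at hx
      funext i
      simp only [gl]
      by_cases h1 : (i : ℕ) < j
      · rw [if_pos h1]
        have := lead_min x (show (i : ℕ) < lead x by omega)
        rw [pad, dif_pos i.isLt] at this
        exact this.symm
      · rw [if_neg h1]
        by_cases h2 : (i : ℕ) = j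
        · rw [if_pos h2]
          have := lead_spec x
          rw [hx, pad, dif_pos hj] at this
          rw [← this]
          congr 1
          exact Fin.ext h2.symm
        · rw [if_neg h2]
          rw [pad_tl hj]
          show pad x (j + 1 + ((i : ℕ) - (j+1))) = x i
          have : j + 1 + ((i : ℕ) - (j+1)) = (i : ℕ) := by omega
          rw [this, pad, dif_pos i.isLt]
    · -- right inverse
      intro y hy
      funext t
      simp only [tl]
      rw [pad, dif_pos (show j + 1 + (t : ℕ) < n by omega)]
      simp only [gl]
      rw [if_neg (by omega), if_neg (by omega)]
      have : j + 1 + (t : ℕ) - (j + 1) = (t : ℕ) := by omega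
      rw [this, pad, dif_pos t.isLt]
    · -- value equality
      intro x hx
      simp only [mem_filter, mem_univ, true_and] at hx
      have hlead : ∀ k < j, pad x k = true := fun k hk => lead_min x (by omega)
      have hxj : pad x j = false := by rw [← hx]; exact lead_spec x
      have hrc : runCount (pad x) n ℓ
          = (if j = ℓ then 1 else 0) + runCount (pad (tl j x)) (n - (j+1)) ℓ := by
        rw [runCount_split (pad x) n j ℓ hℓ hj hlead hxj, pad_tl hj]
      have hwt : wt p x = p ^ j * (1 - p) * wt p (tl j x) := by
        rw [wt_eq_prod_range, wt_eq_prod_range]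
        rw [show Finset.range n = Finset.range ((j+1) + (n - (j+1))) by congr 1; omega]
        rw [Finset.prod_range_add, Finset.prod_range_succ]
        have e1 : ∏ i ∈ range j, (if pad x i then p else 1 - p) = p ^ j := by
          rw [Finset.prod_congr rfl (fun i hi => by rw [hlead i (mem_range.mp hi)])]
          simp
        have e2 : (if pad x j then p else 1 - p) = 1 - p := by rw [hxj]; simp
        have e3 : ∏ i ∈ range (n - (j+1)), (if pad x (j + 1 + i) then p else 1 - p)
            = ∏ i ∈ range (n - (j+1)), (if pad (tl j x) i then p else 1 - p) := by
          refine Finset.prod_congr rfl (fun i hi => ?_)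
          rw [pad_tl hj]
        rw [e1, e2, e3]
      rw [hrc, hwt]
      rw [mul_ite, mul_zero]

lemma sum_wt (p : ℝ) (n : ℕ) : ∑ x : Fin n → Bool, wt p x = 1 := by
  have h := Finset.prod_univ_sum (fun _ : Fin n => (Finset.univ : Finset Bool))
    (fun _ b => if b then p else 1 - p)
  simp only [Fintype.piFinset_univ] at h
  unfold wt
  rw [← h]
  simp

lemma wt_nonneg {p : ℝ} (hp0 : 0 ≤ p) (hp1 : p ≤ 1) {n : ℕ} (x : Fin n → Bool) :
    0 ≤ wt p x :=
  Finset.prod_nonneg fun i _ => by split <;> linarith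

lemma Pr_nonneg {p : ℝ} (hp0 : 0 ≤ p) (hp1 : p ≤ 1) (n : ℕ) (A : Set (ℕ → Bool)) :
    0 ≤ Pr p n A :=
  Finset.sum_nonneg fun x _ => by
    split
    · exact wt_nonneg hp0 hp1 x
    · exact le_refl 0

lemma Pr_le_one {p : ℝ} (hp0 : 0 ≤ p) (hp1 : p ≤ 1) (n : ℕ) (A : Set (ℕ → Bool)) :
    Pr p n A ≤ 1 := by
  rw [Pr, ← sum_wt p n]
  refine Finset.sum_le_sum fun x _ => ?_
  split
  · exact le_refl _
  · exact wt_nonneg hp0 hp1 x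

lemma summable_wpow_mul {w : ℝ} (hw0 : 0 ≤ w) (hw1 : w < 1) {f : ℕ → ℝ}
    (h0 : ∀ n, 0 ≤ f n) (h1 : ∀ n, f n ≤ 1) : Summable (fun n => w ^ n * f n) := by
  refine Summable.of_nonneg_of_le (fun n => mul_nonneg (pow_nonneg hw0 n) (h0 n))
    (fun n => ?_) (summable_geometric_of_lt_one hw0 hw1)
  calc w ^ n * f n ≤ w ^ n * 1 := mul_le_mul_of_nonneg_left (h1 n) (pow_nonneg hw0 n)
    _ = w ^ n := mul_one _

lemma summable_norm_wpow_mul {w : ℝ} (hw0 : 0 ≤ w) (hw1 : w < 1) {f : ℕ → ℝ}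
    (h0 : ∀ n, 0 ≤ f n) (h1 : ∀ n, f n ≤ 1) :
    Summable (fun n => ‖w ^ n * f n‖) := by
  refine Summable.of_nonneg_of_le (fun n => norm_nonneg _) (fun n => ?_)
    (summable_geometric_of_lt_one hw0 hw1)
  rw [Real.norm_eq_abs, abs_of_nonneg (mul_nonneg (pow_nonneg hw0 n) (h0 n))]
  calc w ^ n * f n ≤ w ^ n * 1 := mul_le_mul_of_nonneg_left (h1 n) (pow_nonneg hw0 n)
    _ = w ^ n := mul_one _

/-- `R*_ℓ` has a `Geo(α_ℓ, β_ℓ)` distribution. -/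
theorem stmt1 (p w : ℝ) (hp : 0 < p) (hp1 : p < 1) (hw : 0 < w) (hw1 : w < 1)
    (ℓ : ℕ) (hℓ : 1 ≤ ℓ) :
    ((1 - w) * ∑' n : ℕ, w ^ n * Pr p n {x | runCount x n ℓ = 0} =
      (1 - w) * (1 + ∑' j : ℕ, if j + 1 = ℓ then 0 else (w * p) ^ (j + 1)) /
        (1 - w * (1 - p) -
          w * (1 - p) * ∑' j : ℕ, if j + 1 = ℓ then 0 else (w * p) ^ (j + 1))) ∧
    ∀ m : ℕ, 1 ≤ m →
      (1 - w) * ∑' n : ℕ, w ^ n * Pr p n {x | runCount x n ℓ = m} =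
        (1 - (1 - w) * (1 + ∑' j : ℕ, if j + 1 = ℓ then 0 else (w * p) ^ (j + 1)) /
            (1 - w * (1 - p) -
              w * (1 - p) * ∑' j : ℕ, if j + 1 = ℓ then 0 else (w * p) ^ (j + 1))) *
        (1 - w * (1 - p) * (w * p) ^ ℓ /
            (1 - w * (1 - p) -
              w * (1 - p) * ∑' j : ℕ, if j + 1 = ℓ then 0 else (w * p) ^ (j + 1))) *
        (w * (1 - p) * (w * p) ^ ℓ /
            (1 - w * (1 - p) -
              w * (1 - p) * ∑' j : ℕ, if j + 1 = ℓ then 0 else (w * p) ^ (j + 1))) ^ (m - 1) := by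
  have hp0 : (0:ℝ) ≤ p := hp.le
  have hp1' : p ≤ 1 := hp1.le
  have hα0 : 0 < w * p := mul_pos hw hp
  have hα1 : w * p < 1 := by nlinarith
  have h1α : 0 < 1 - w * p := by linarith
  have hβ0 : 0 < w * (1 - p) := by nlinarith
  have hgeo : Summable (fun k : ℕ => (w * p) ^ k) :=
    summable_geometric_of_lt_one hα0.le hα1
  have hgeo1 : Summable (fun j : ℕ => (w * p) ^ (j + 1)) :=
    (summable_nat_add_iff 1).mpr hgeo
  have hgeo1v : (∑' j : ℕ, (w * p) ^ (j + 1)) = (w * p) / (1 - w * p) := by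
    have h : ∀ j : ℕ, (w * p) ^ (j + 1) = (w * p) * (w * p) ^ j := fun j => by ring
    rw [tsum_congr h, tsum_mul_left, tsum_geometric_of_lt_one hα0.le hα1, div_eq_mul_inv]
  have hite : Summable (fun j : ℕ => if j = ℓ - 1 then (w * p) ^ ℓ else (0:ℝ)) :=
    (hasSum_ite_eq (ℓ - 1) ((w * p) ^ ℓ)).summable
  have hsigpt : ∀ j : ℕ, (if j + 1 = ℓ then (0:ℝ) else (w * p) ^ (j + 1))
      = (w * p) ^ (j + 1) - (if j = ℓ - 1 then (w * p) ^ ℓ else 0) := by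
    intro j
    by_cases h : j + 1 = ℓ
    · rw [if_pos h, if_pos (by omega), ← h]; ring
    · rw [if_neg h, if_neg (by omega), sub_zero]
  have hσs : Summable (fun j : ℕ => if j + 1 = ℓ then (0:ℝ) else (w * p) ^ (j + 1)) := by
    rw [funext hsigpt]; exact hgeo1.sub hite
  have hσv : (∑' j : ℕ, if j + 1 = ℓ then (0:ℝ) else (w * p) ^ (j + 1))
      = (w * p) / (1 - w * p) - (w * p) ^ ℓ := by
    rw [tsum_congr hsigpt, Summable.tsum_sub hgeo1 hite, hgeo1v, tsum_ite_eq]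
  rw [hσv]
  -- abbreviations
  set σ : ℝ := (w * p) / (1 - w * p) - (w * p) ^ ℓ with hσdef
  -- the one-removed geometric sum
  have hA : Summable (fun k : ℕ => if k = ℓ then (0:ℝ) else (w * p) ^ k) := by
    refine Summable.of_nonneg_of_le (fun k => ?_) (fun k => ?_) hgeo
    · split
      · exact le_refl 0
      · exact pow_nonneg hα0.le k
    · split
      · exact pow_nonneg hα0.le k
      · exact le_refl _
  have hAv : (∑' k : ℕ, if k = ℓ then (0:ℝ) else (w * p) ^ k) = 1 + σ := by
    rw [Summable.tsum_eq_zero_add hA, if_neg (by omega), pow_zero, hσv, hσdef]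
  -- the run-count generating functions
  set S : ℕ → ℝ := fun m => ∑' n : ℕ, w ^ n * Pr p n {x | runCount x n ℓ = m} with hSdef
  have hQ0 : ∀ (m k : ℕ), 0 ≤ Pr p k {x | runCount x k ℓ = m} :=
    fun m k => Pr_nonneg hp0 hp1' _ _
  have hQ1 : ∀ (m k : ℕ), Pr p k {x | runCount x k ℓ = m} ≤ 1 :=
    fun m k => Pr_le_one hp0 hp1' _ _
  have hSsum : ∀ m : ℕ, Summable (fun n : ℕ => w ^ n * Pr p n {x | runCount x n ℓ = m}) :=
    fun m => summable_wpow_mul hw.le hw1 (hQ0 m) (hQ1 m)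
  -- key recursion
  have key : ∀ m : ℕ,
      S m = (if m = 0 then 1 + σ else if m = 1 then (w * p) ^ ℓ else 0)
        + (w * (1 - p)) * (1 + σ) * S m
        + (w * (1 - p)) * (w * p) ^ ℓ * (if m = 0 then 0 else S (m - 1)) := by
    intro m
    -- norm summability of the pieces
    have hf1n : Summable (fun k : ℕ => ‖if k = ℓ then (0:ℝ) else w ^ (k+1) * (p ^ k * (1 - p))‖) := by
      refine Summable.of_nonneg_of_le (fun k => norm_nonneg _) (fun k => ?_)
        (hgeo.mul_left (w * (1 - p)))
      have h0 : (0:ℝ) ≤ if k = ℓ then (0:ℝ) else w ^ (k+1) * (p ^ k * (1 - p)) := by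
        split
        · exact le_refl 0
        · exact mul_nonneg (pow_nonneg hw.le _) (mul_nonneg (pow_nonneg hp0 _) (by linarith))
      rw [Real.norm_eq_abs, abs_of_nonneg h0]
      split
      · exact mul_nonneg hβ0.le (pow_nonneg hα0.le _)
      · exact le_of_eq (by ring)
    have hf2n : Summable (fun k : ℕ => ‖if k = ℓ then w ^ (k+1) * (p ^ k * (1 - p)) else (0:ℝ)‖) := by
      refine Summable.of_nonneg_of_le (fun k => norm_nonneg _) (fun k => ?_)
        (hgeo.mul_left (w * (1 - p)))
      have h0 : (0:ℝ) ≤ if k = ℓ then w ^ (k+1) * (p ^ k * (1 - p)) else (0:ℝ) := by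
        split
        · exact mul_nonneg (pow_nonneg hw.le _) (mul_nonneg (pow_nonneg hp0 _) (by linarith))
        · exact le_refl 0
      rw [Real.norm_eq_abs, abs_of_nonneg h0]
      split
      · exact le_of_eq (by ring)
      · exact mul_nonneg hβ0.le (pow_nonneg hα0.le _)
    have hg1n : Summable (fun k : ℕ => ‖w ^ k * Pr p k {x | runCount x k ℓ = m}‖) :=
      summable_norm_wpow_mul hw.le hw1 (hQ0 m) (hQ1 m)
    have hQQ0 : ∀ k : ℕ, 0 ≤ Pr p k {x | 1 + runCount x k ℓ = m} :=
      fun k => Pr_nonneg hp0 hp1' _ _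
    have hQQ1 : ∀ k : ℕ, Pr p k {x | 1 + runCount x k ℓ = m} ≤ 1 :=
      fun k => Pr_le_one hp0 hp1' _ _
    have hg2n : Summable (fun k : ℕ => ‖w ^ k * Pr p k {x | 1 + runCount x k ℓ = m}‖) :=
      summable_norm_wpow_mul hw.le hw1 hQQ0 hQQ1
    have hg2s : Summable (fun k : ℕ => w ^ k * Pr p k {x | 1 + runCount x k ℓ = m}) :=
      summable_wpow_mul hw.le hw1 hQQ0 hQQ1
    -- Cauchy products
    have hC1 := tsum_mul_tsum_eq_tsum_sum_range_of_summable_norm hf1n hg1n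
    have hC2 := tsum_mul_tsum_eq_tsum_sum_range_of_summable_norm hf2n hg2n
    have hU1 : Summable (fun n : ℕ => ∑ k ∈ Finset.range (n+1),
        (if k = ℓ then (0:ℝ) else w ^ (k+1) * (p ^ k * (1 - p)))
          * (w ^ (n - k) * Pr p (n - k) {x | runCount x (n - k) ℓ = m})) :=
      (summable_norm_sum_mul_range_of_summable_norm hf1n hg1n).of_norm
    have hU2 : Summable (fun n : ℕ => ∑ k ∈ Finset.range (n+1),
        (if k = ℓ then w ^ (k+1) * (p ^ k * (1 - p)) else (0:ℝ))
          * (w ^ (n - k) * Pr p (n - k) {x | 1 + runCount x (n - k) ℓ = m})) :=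
      (summable_norm_sum_mul_range_of_summable_norm hf2n hg2n).of_norm
    -- the convolution part
    have huS : ∀ n : ℕ, (w ^ (n+1) * ∑ j ∈ Finset.range (n+1), p ^ j * (1 - p) *
          Pr p ((n+1) - (j+1)) {x | (if j = ℓ then 1 else 0) + runCount x ((n+1) - (j+1)) ℓ = m})
        = (∑ k ∈ Finset.range (n+1),
            (if k = ℓ then (0:ℝ) else w ^ (k+1) * (p ^ k * (1 - p)))
              * (w ^ (n - k) * Pr p (n - k) {x | runCount x (n - k) ℓ = m}))
          + (∑ k ∈ Finset.range (n+1),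
            (if k = ℓ then w ^ (k+1) * (p ^ k * (1 - p)) else (0:ℝ))
              * (w ^ (n - k) * Pr p (n - k) {x | 1 + runCount x (n - k) ℓ = m})) := by
      intro n
      rw [Finset.mul_sum, ← Finset.sum_add_distrib]
      refine Finset.sum_congr rfl (fun k hk => ?_)
      rw [Finset.mem_range] at hk
      have hnk : n + 1 - (k + 1) = n - k := by omega
      have hww : w ^ (n + 1) = w ^ (k + 1) * w ^ (n - k) := by
        rw [← pow_add]; congr 1; omega
      rw [hnk]
      by_cases hkl : k = ℓ
      · have hset : ({x | (if k = ℓ then 1 else 0) + runCount x (n - k) ℓ = m} : Set (ℕ → Bool))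
            = {x | 1 + runCount x (n - k) ℓ = m} := by
          ext z; simp [hkl]
        rw [hset, if_pos hkl, if_pos hkl, zero_mul, zero_add, hww]; ring
      · have hset : ({x | (if k = ℓ then 1 else 0) + runCount x (n - k) ℓ = m} : Set (ℕ → Bool))
            = {x | runCount x (n - k) ℓ = m} := by
          ext z; simp [hkl]
        rw [hset, if_neg hkl, if_neg hkl, zero_mul, add_zero, hww]; ring
    set u : ℕ → ℝ := fun n => w ^ n * ∑ j ∈ Finset.range n, p ^ j * (1 - p) *
        Pr p (n - (j+1)) {x | (if j = ℓ then 1 else 0) + runCount x (n - (j+1)) ℓ = m} with hudef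
    have hu0 : u 0 = 0 := by simp [hudef]
    have husum : Summable u := by
      refine (summable_nat_add_iff 1).mp ?_
      exact Summable.congr (hU1.add hU2) (fun n => (huS n).symm)
    -- values of the simple series
    have hf1v : (∑' k : ℕ, if k = ℓ then (0:ℝ) else w ^ (k+1) * (p ^ k * (1 - p)))
        = (w * (1 - p)) * (1 + σ) := by
      have h : ∀ k : ℕ, (if k = ℓ then (0:ℝ) else w ^ (k+1) * (p ^ k * (1 - p)))
          = (w * (1 - p)) * (if k = ℓ then (0:ℝ) else (w * p) ^ k) := by
        intro k
        split
        · rw [mul_zero]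
        · ring
      rw [tsum_congr h, tsum_mul_left, hAv]
    have hf2v : (∑' k : ℕ, if k = ℓ then w ^ (k+1) * (p ^ k * (1 - p)) else (0:ℝ))
        = (w * (1 - p)) * (w * p) ^ ℓ := by
      have h : ∀ k : ℕ, (if k = ℓ then w ^ (k+1) * (p ^ k * (1 - p)) else (0:ℝ))
          = (if k = ℓ then (w * (1 - p)) * (w * p) ^ ℓ else (0:ℝ)) := by
        intro k
        by_cases hkl : k = ℓ
        · rw [if_pos hkl, if_pos hkl, hkl]; ring
        · rw [if_neg hkl, if_neg hkl]
      rw [tsum_congr h, tsum_ite_eq]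
    have hg2v : (∑' k : ℕ, w ^ k * Pr p k {x | 1 + runCount x k ℓ = m})
        = (if m = 0 then 0 else S (m - 1)) := by
      by_cases hm : m = 0
      · rw [if_pos hm]
        have h : ∀ k : ℕ, w ^ k * Pr p k {x | 1 + runCount x k ℓ = m} = 0 := by
          intro k
          have : Pr p k {x | 1 + runCount x k ℓ = m} = 0 := by
            rw [Pr_eq_sum]
            refine Finset.sum_eq_zero (fun x _ => ?_)
            rw [if_neg (by omega)]
          rw [this, mul_zero]
        rw [tsum_congr h, tsum_zero]
      · rw [if_neg hm, hSdef]
        refine tsum_congr (fun k => ?_)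
        congr 2
        ext z
        simp only [Set.mem_setOf_eq]
        omega
    -- value of the boundary series
    have hTv : (∑' n : ℕ, w ^ n * (if (if n = ℓ then 1 else 0) = m then p ^ n else 0))
        = (if m = 0 then 1 + σ else if m = 1 then (w * p) ^ ℓ else 0) := by
      by_cases hm0 : m = 0
      · rw [if_pos hm0]
        have h : ∀ n : ℕ, w ^ n * (if (if n = ℓ then 1 else 0) = m then p ^ n else 0)
            = (if n = ℓ then (0:ℝ) else (w * p) ^ n) := by
          intro n
          by_cases hnl : n = ℓ
          · rw [if_pos hnl, if_pos hnl, if_neg (by omega), mul_zero]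
          · rw [if_neg hnl, if_neg hnl, if_pos (by omega), mul_pow]
        rw [tsum_congr h, hAv]
      · by_cases hm1 : m = 1
        · rw [if_neg hm0, if_pos hm1]
          have h : ∀ n : ℕ, w ^ n * (if (if n = ℓ then 1 else 0) = m then p ^ n else 0)
              = (if n = ℓ then (w * p) ^ ℓ else (0:ℝ)) := by
            intro n
            by_cases hnl : n = ℓ
            · rw [if_pos hnl, if_pos hnl, if_pos (by omega), ← hnl, mul_pow]
            · rw [if_neg hnl, if_neg hnl, if_neg (by omega), mul_zero]
          rw [tsum_congr h, tsum_ite_eq]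
        · rw [if_neg hm0, if_neg hm1]
          have h : ∀ n : ℕ, w ^ n * (if (if n = ℓ then 1 else 0) = m then p ^ n else 0)
              = 0 := by
            intro n
            rw [if_neg (by split <;> omega), mul_zero]
          rw [tsum_congr h, tsum_zero]
    have hTs : Summable (fun n : ℕ => w ^ n * (if (if n = ℓ then 1 else 0) = m then p ^ n else 0)) := by
      refine summable_wpow_mul hw.le hw1 (fun n => ?_) (fun n => ?_)
      · split <;> split
        · exact pow_nonneg hp0 _
        · exact le_refl 0
        · exact pow_nonneg hp0 _
        · exact le_refl 0
      · split <;> split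
        · exact pow_le_one₀ hp0 hp1'
        · exact zero_le_one
        · exact pow_le_one₀ hp0 hp1'
        · exact zero_le_one
    -- assemble
    have hmain : ∀ n : ℕ, w ^ n * Pr p n {x | runCount x n ℓ = m}
        = w ^ n * (if (if n = ℓ then 1 else 0) = m then p ^ n else 0) + u n := by
      intro n
      rw [Pr_rec p ℓ hℓ m n]
      simp only [hudef]
      ring
    have hstep : S m = (∑' n : ℕ, w ^ n * (if (if n = ℓ then 1 else 0) = m then p ^ n else 0))
        + ∑' n : ℕ, u n := by
      rw [hSdef]
      dsimp only
      rw [tsum_congr hmain, Summable.tsum_add hTs husum]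
    have hutsum : (∑' n : ℕ, u n)
        = (w * (1 - p)) * (1 + σ) * S m
          + (w * (1 - p)) * (w * p) ^ ℓ * (if m = 0 then 0 else S (m - 1)) := by
      rw [Summable.tsum_eq_zero_add husum, hu0, zero_add]
      have : (∑' n : ℕ, u (n + 1))
          = (∑' n : ℕ, ((∑ k ∈ Finset.range (n+1),
            (if k = ℓ then (0:ℝ) else w ^ (k+1) * (p ^ k * (1 - p)))
              * (w ^ (n - k) * Pr p (n - k) {x | runCount x (n - k) ℓ = m}))
          + (∑ k ∈ Finset.range (n+1),
            (if k = ℓ then w ^ (k+1) * (p ^ k * (1 - p)) else (0:ℝ))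
              * (w ^ (n - k) * Pr p (n - k) {x | 1 + runCount x (n - k) ℓ = m})))) := by
        refine tsum_congr (fun n => ?_)
        rw [hudef]
        exact huS n
      rw [this, Summable.tsum_add hU1 hU2, ← hC1, ← hC2, hf1v, hf2v, hg2v, hSdef]
    conv_lhs => rw [hstep, hutsum, hTv]
    ring
  -- positivity of the denominator
  have hc0 : 0 < (w * p) ^ ℓ := pow_pos hα0 ℓ
  have hcα : (w * p) ^ ℓ ≤ w * p := by
    calc (w * p) ^ ℓ ≤ (w * p) ^ 1 := pow_le_pow_of_le_one hα0.le hα1.le hℓ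
      _ = w * p := pow_one _
  have h1σ : 1 + σ = 1 / (1 - w * p) - (w * p) ^ ℓ := by
    rw [hσdef]
    field_simp
    ring
  have hσ0 : 0 < 1 + σ := by
    rw [h1σ]
    have h1 : 1 ≤ 1 / (1 - w * p) := by
      rw [le_div_iff₀ h1α]; nlinarith
    nlinarith
  have hd0 : 0 < 1 - (w * (1 - p)) * (1 + σ) := by
    have hb : (w * (1 - p)) * (1 / (1 - w * p)) < 1 := by
      rw [mul_one_div, div_lt_one h1α]; nlinarith
    have := mul_pos hβ0 hc0
    calc (0:ℝ) < 1 - (w * (1 - p)) * (1 / (1 - w * p)) + (w * (1 - p)) * (w * p) ^ ℓ := by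
          nlinarith
      _ = 1 - (w * (1 - p)) * (1 + σ) := by rw [h1σ]; ring
  have hdne : 1 - (w * (1 - p)) * (1 + σ) ≠ 0 := ne_of_gt hd0
  -- solve the recursion
  have hS0 : S 0 = (1 + σ) / (1 - (w * (1 - p)) * (1 + σ)) := by
    have h := key 0
    rw [if_pos rfl, if_pos rfl, mul_zero, add_zero] at h
    rw [eq_div_iff hdne]
    linear_combination h
  have hS1 : S 1 = ((w * p) ^ ℓ + (w * (1 - p)) * (w * p) ^ ℓ * S 0)
      / (1 - (w * (1 - p)) * (1 + σ)) := by
    have h := key 1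
    rw [if_neg one_ne_zero, if_pos rfl, if_neg one_ne_zero] at h
    norm_num at h
    rw [eq_div_iff hdne]
    linear_combination h
  have hSstep : ∀ k : ℕ, S (k + 2)
      = ((w * (1 - p)) * (w * p) ^ ℓ / (1 - (w * (1 - p)) * (1 + σ))) * S (k + 1) := by
    intro k
    have h := key (k + 2)
    rw [if_neg (by omega), if_neg (by omega), if_neg (by omega)] at h
    have hk2 : k + 2 - 1 = k + 1 := by omega
    rw [hk2] at h
    rw [div_mul_eq_mul_div, eq_div_iff hdne]
    linear_combination h
  have hpow : ∀ k : ℕ, S (k + 1)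
      = ((w * (1 - p)) * (w * p) ^ ℓ / (1 - (w * (1 - p)) * (1 + σ))) ^ k * S 1 := by
    intro k
    induction k with
    | zero => rw [pow_zero, one_mul]
    | succ k ih =>
        rw [show k + 1 + 1 = k + 2 from rfl, hSstep k, ih]
        ring
  -- the main geometric identity at m = 1
  have h1σ' : 1 + σ = (1 - (1 - w * p) * (w * p) ^ ℓ) / (1 - w * p) := by
    rw [hσdef]
    field_simp
    ring
  have hDD : 1 - (w * (1 - p)) * (1 + σ)
      = ((1 - w * p) - w * (1 - p) * (1 - (1 - w * p) * (w * p) ^ ℓ)) / (1 - w * p) := by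
    rw [h1σ']
    field_simp
  have hE0 : 0 < (1 - w * p) - w * (1 - p) * (1 - (1 - w * p) * (w * p) ^ ℓ) := by
    have h := mul_pos h1α hd0
    rw [hDD] at h
    have := h1α.ne'
    calc (0:ℝ) < (1 - w * p) *
        (((1 - w * p) - w * (1 - p) * (1 - (1 - w * p) * (w * p) ^ ℓ)) / (1 - w * p)) := h
      _ = (1 - w * p) - w * (1 - p) * (1 - (1 - w * p) * (w * p) ^ ℓ) := by
          field_simp
  have hEne : (1 - w * p) - w * (1 - p) * (1 - (1 - w * p) * (w * p) ^ ℓ) ≠ 0 := ne_of_gt hE0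
  have hS0' : S 0 = (1 - (1 - w * p) * (w * p) ^ ℓ)
      / ((1 - w * p) - w * (1 - p) * (1 - (1 - w * p) * (w * p) ^ ℓ)) := by
    rw [hS0, hDD, h1σ']
    field_simp
  have hkey1 : (1 - w) * S 1
      = (1 - (1 - w) * (1 + σ) / (1 - (w * (1 - p)) * (1 + σ)))
        * (1 - w * (1 - p) * (w * p) ^ ℓ / (1 - (w * (1 - p)) * (1 + σ))) := by
    rw [hS1, hS0', hDD, h1σ']
    have := h1α.ne'
    generalize hE : (1 - w * p) - w * (1 - p) * (1 - (1 - w * p) * (w * p) ^ ℓ) = e at hEne ⊢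
    field_simp
    rw [← hE]
    ring
  constructor
  · -- m = 0
    rw [show (∑' n : ℕ, w ^ n * Pr p n {x | runCount x n ℓ = 0}) = S 0 from rfl, hS0]
    rw [mul_div_assoc]
    congr 2
    ring
  · -- m ≥ 1
    intro m hm
    obtain ⟨k, rfl⟩ : ∃ k, m = k + 1 := ⟨m - 1, by omega⟩
    rw [show (∑' n : ℕ, w ^ n * Pr p n {x | runCount x n ℓ = (k+1)}) = S (k+1) from rfl]
    rw [hpow k]
    have hd' : 1 - w * (1 - p) - w * (1 - p) * σ = 1 - (w * (1 - p)) * (1 + σ) := by ring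
    rw [hd']
    have hk1 : k + 1 - 1 = k := by omega
    rw [hk1]
    calc (1 - w) * (((w * (1 - p)) * (w * p) ^ ℓ / (1 - (w * (1 - p)) * (1 + σ))) ^ k * S 1)
        = ((w * (1 - p)) * (w * p) ^ ℓ / (1 - (w * (1 - p)) * (1 + σ))) ^ k
          * ((1 - w) * S 1) := by ring
      _ = _ := by
          rw [hkey1]
          ring
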